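/- arXiv:1203.4667 — 4 statements merged into one kernel-verified Lean document; each statement's English description precedes it below -/
import Mathlib

section
/- Let p ∈ ℕ, σ₁(x,y,λ) = (1 + tanh((x-1)·y·λ))/2, σ_p(x,y,λ) = Σ_{i=0}^{p-1} σ₁(x - i, y + ln p, λ), and int_p(x) = min(p, ⌊x⌋). For any x ≥ 0, y > 0, λ > 2: |int_p(x) - σ_p(x,y,λ)| ≤ 1/2 + e^{-y}. Furthermore, if x < 1 - 1/λ, or x > p + 1/λ, or the distance from x to the nearest natural number is at least 1/λ, then |int_p(x) - σ_p(x,y,λ)| ≤ e^{-y}. -/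
private lemma sig_err (z : ℝ) :
    |(if 0 ≤ z then (1:ℝ) else 0) - (1 + Real.tanh z) / 2| ≤
      min (1/2) (Real.exp (-(2 * |z|))) := by
  have key : ∀ w : ℝ, (1 + Real.tanh w) / 2 = Real.exp w / (Real.exp w + Real.exp (-w)) := by
    intro w
    rw [Real.tanh_eq_sinh_div_cosh, Real.sinh_eq, Real.cosh_eq]
    have h0 : Real.exp w + Real.exp (-w) ≠ 0 := by positivity
    field_simp
    ring
  have bound : ∀ w : ℝ, 0 ≤ w →
      Real.exp (-w) / (Real.exp w + Real.exp (-w)) ≤ min (1/2) (Real.exp (-(2 * w))) := by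
    intro w hw
    have h1 : Real.exp (-w) ≤ Real.exp w := Real.exp_le_exp.mpr (by linarith)
    have h2 : (0:ℝ) < Real.exp w + Real.exp (-w) := by positivity
    refine le_min ?_ ?_
    · rw [div_le_iff₀ h2]
      nlinarith [Real.exp_pos (-w)]
    · have hexp : Real.exp (-(2*w)) = Real.exp (-w) / Real.exp w := by
        rw [← Real.exp_sub]; ring_nf
      rw [hexp]
      gcongr
      all_goals linarith [Real.exp_pos (-w), Real.exp_pos w]
  rcases le_or_gt 0 z with hz | hz
  · rw [if_pos hz, key]
    have h2 : (0:ℝ) < Real.exp z + Real.exp (-z) := by positivity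
    have hid : 1 - Real.exp z / (Real.exp z + Real.exp (-z))
        = Real.exp (-z) / (Real.exp z + Real.exp (-z)) := by
      field_simp
      ring
    rw [hid, abs_of_nonneg (by positivity), abs_of_nonneg hz]
    exact bound z hz
  · rw [if_neg (not_le.mpr hz), key]
    have h2 : (0:ℝ) < Real.exp z + Real.exp (-z) := by positivity
    rw [zero_sub, abs_neg, abs_of_nonneg (by positivity), abs_of_neg hz]
    have hc : Real.exp z / (Real.exp z + Real.exp (-z))
        = Real.exp (-(-z)) / (Real.exp (-z) + Real.exp (-(-z))) := by
      rw [neg_neg, add_comm]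
    rw [hc]
    exact bound (-z) (by linarith)

private lemma step_sum (p : ℕ) (x : ℝ) (hx : 0 ≤ x) :
    min (p : ℝ) (⌊x⌋ : ℝ) =
      ∑ i ∈ Finset.range p, (if 0 ≤ x - i - 1 then (1:ℝ) else 0) := by
  have hfl : 0 ≤ ⌊x⌋ := Int.floor_nonneg.mpr hx
  set m := ⌊x⌋.toNat with hm
  have hmx : (⌊x⌋ : ℝ) = (m : ℝ) := by
    rw [hm]; exact_mod_cast (congrArg (fun z : ℤ => (z : ℝ)) (Int.toNat_of_nonneg hfl)).symm
  have hcond : ∀ i : ℕ, (0 ≤ x - i - 1) ↔ i < m := by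
    intro i
    rw [sub_sub, sub_nonneg]
    constructor
    · intro h
      have h2 : ((i:ℤ)+1 : ℤ) ≤ ⌊x⌋ := Int.le_floor.mpr (by push_cast; linarith)
      omega
    · intro h
      have h2 : ((i:ℤ)+1 : ℤ) ≤ ⌊x⌋ := by omega
      have h3 := Int.le_floor.mp h2
      push_cast at h3
      linarith
  rw [hmx]
  have : ∑ i ∈ Finset.range p, (if 0 ≤ x - i - 1 then (1:ℝ) else 0)
      = ∑ i ∈ Finset.range p, (if i < m then (1:ℝ) else 0) :=
    Finset.sum_congr rfl fun i _ => by rw [if_congr (hcond i) rfl rfl]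
  rw [this, Finset.sum_boole]
  have hfilter : (Finset.range p).filter (· < m) = Finset.range (min p m) := by
    ext i
    simp [Nat.lt_min]
  rw [hfilter]
  simp [Nat.cast_min]

theorem sigmap_approx_intp (p : ℕ) (x y lam : ℝ) (hx : 0 ≤ x) (hy : 0 < y) (hlam : 2 < lam) :
    |min (p : ℝ) (⌊x⌋ : ℝ) -
        ∑ i ∈ Finset.range p,
          (1 + Real.tanh ((x - i - 1) * (y + Real.log p) * lam)) / 2| ≤ 1 / 2 + Real.exp (-y) ∧
    ((x < 1 - 1 / lam ∨ x > p + 1 / lam ∨ ∀ n : ℕ, 1 / lam ≤ |x - n|) →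
      |min (p : ℝ) (⌊x⌋ : ℝ) -
          ∑ i ∈ Finset.range p,
            (1 + Real.tanh ((x - i - 1) * (y + Real.log p) * lam)) / 2| ≤ Real.exp (-y)) := by
  have hexpy : 0 < Real.exp (-y) := Real.exp_pos _
  rcases Nat.eq_zero_or_pos p with hp0 | hp
  · subst hp0
    have hfl : (0:ℝ) ≤ (⌊x⌋:ℝ) := by exact_mod_cast Int.floor_nonneg.mpr hx
    simp only [Finset.range_zero, Finset.sum_empty, Nat.cast_zero, min_eq_left hfl,
      sub_zero, abs_zero]
    constructor
    · linarith
    · intro _; linarith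
  -- p ≥ 1
  set L := y + Real.log p with hLdef
  clear_value L
  have hp1 : (1:ℝ) ≤ (p:ℝ) := by exact_mod_cast hp
  have hlogp : 0 ≤ Real.log p := Real.log_nonneg hp1
  have hL0 : 0 < L := by rw [hLdef]; linarith
  have hlam0 : 0 < lam := by linarith
  have hLl : 0 < L * lam := mul_pos hL0 hlam0
  have hhalf : 1/lam < 1/2 := by
    rw [div_lt_div_iff₀ hlam0 (by norm_num : (0:ℝ) < 2)]; linarith
  have hlaminv : 0 < 1/lam := by positivity
  -- per-term error bound
  have herr : ∀ i : ℕ,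
      |(if 0 ≤ x - i - 1 then (1:ℝ) else 0) - (1 + Real.tanh ((x - i - 1) * L * lam)) / 2|
        ≤ min (1/2) (Real.exp (-(2 * |x - i - 1| * (L * lam)))) := by
    intro i
    have h := sig_err ((x - i - 1) * L * lam)
    have hiff : (0 ≤ (x - i - 1) * L * lam) ↔ (0 ≤ x - i - 1) := by
      rw [mul_assoc]
      exact mul_nonneg_iff_of_pos_right hLl
    have habs : |(x - i - 1) * L * lam| = |x - i - 1| * (L * lam) := by
      rw [mul_assoc, abs_mul, abs_of_pos hLl]
    rw [if_congr hiff rfl rfl, habs] at h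
    calc |(if 0 ≤ x - i - 1 then (1:ℝ) else 0) - (1 + Real.tanh ((x - i - 1) * L * lam)) / 2|
        ≤ min (1/2) (Real.exp (-(2 * (|x - i - 1| * (L * lam))))) := h
      _ = min (1/2) (Real.exp (-(2 * |x - i - 1| * (L * lam)))) := by ring_nf
  -- sum of errors over a set of "good" indices
  have hsumE : ∀ s : Finset ℕ, s ⊆ Finset.range p →
      (∀ i ∈ s, 1/lam ≤ |x - i - 1|) →
      ∑ i ∈ s, min (1/2:ℝ) (Real.exp (-(2 * |x - i - 1| * (L * lam)))) ≤ Real.exp (-y) := by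
    intro s hs hge
    have hterm : ∀ i ∈ s, min (1/2:ℝ) (Real.exp (-(2 * |x - i - 1| * (L * lam))))
        ≤ Real.exp (-(2*L)) := by
      intro i hi
      refine (min_le_right _ _).trans (Real.exp_le_exp.mpr ?_)
      have h1 : 1/lam ≤ |x - i - 1| := hge i hi
      have h2 : 2 * (1/lam) * (L * lam) ≤ 2 * |x - i - 1| * (L * lam) := by
        have := mul_le_mul_of_nonneg_right (by linarith : 2 * (1/lam) ≤ 2 * |x - i - 1|) hLl.le
        linarith
      have h3 : 2 * (1/lam) * (L * lam) = 2 * L := by field_simp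
      nlinarith [h2, h3]
    have hcard : (s.card : ℝ) ≤ (p : ℝ) := by
      exact_mod_cast (Finset.card_le_card hs).trans (by simp)
    have hexp2L : Real.exp (-(2*L)) = Real.exp (-(2*y)) / (p:ℝ)^2 := by
      have hlg : -(2*L) = -(2*y) + Real.log (((p:ℝ)^2)⁻¹) := by
        rw [Real.log_inv, Real.log_pow, hLdef]; push_cast; ring
      rw [hlg, Real.exp_add, Real.exp_log (by positivity)]
      ring
    calc ∑ i ∈ s, min (1/2:ℝ) (Real.exp (-(2 * |x - i - 1| * (L * lam))))
        ≤ s.card • Real.exp (-(2*L)) := Finset.sum_le_card_nsmul s _ _ hterm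
      _ = (s.card : ℝ) * Real.exp (-(2*L)) := by rw [nsmul_eq_mul]
      _ ≤ (p:ℝ) * Real.exp (-(2*L)) := by
          exact mul_le_mul_of_nonneg_right hcard (Real.exp_pos _).le
      _ = Real.exp (-(2*y)) / (p:ℝ) := by rw [hexp2L]; field_simp
      _ ≤ Real.exp (-(2*y)) := by
          apply div_le_self (Real.exp_pos _).le hp1
      _ ≤ Real.exp (-y) := Real.exp_le_exp.mpr (by linarith)
  -- the main difference bound
  have hdiff : |min (p : ℝ) (⌊x⌋ : ℝ) -
      ∑ i ∈ Finset.range p, (1 + Real.tanh ((x - i - 1) * L * lam)) / 2|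
      ≤ ∑ i ∈ Finset.range p, min (1/2:ℝ) (Real.exp (-(2 * |x - i - 1| * (L * lam)))) := by
    rw [step_sum p x hx, ← Finset.sum_sub_distrib]
    exact (Finset.abs_sum_le_sum_abs _ _).trans (Finset.sum_le_sum fun i _ => herr i)
  constructor
  · -- first part
    by_cases hex : ∃ i₀ ∈ Finset.range p, |x - i₀ - 1| < 1/lam
    · obtain ⟨i₀, hi₀, hlt⟩ := hex
      have hsplit : ∑ i ∈ Finset.range p, min (1/2:ℝ) (Real.exp (-(2 * |x - i - 1| * (L * lam))))
          = min (1/2:ℝ) (Real.exp (-(2 * |x - i₀ - 1| * (L * lam))))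
            + ∑ i ∈ (Finset.range p).erase i₀,
                min (1/2:ℝ) (Real.exp (-(2 * |x - i - 1| * (L * lam)))) :=
        (Finset.add_sum_erase _ _ hi₀).symm
      have h1 : min (1/2:ℝ) (Real.exp (-(2 * |x - i₀ - 1| * (L * lam)))) ≤ 1/2 :=
        min_le_left _ _
      have h2 : ∑ i ∈ (Finset.range p).erase i₀,
          min (1/2:ℝ) (Real.exp (-(2 * |x - i - 1| * (L * lam)))) ≤ Real.exp (-y) := by
        apply hsumE _ (Finset.erase_subset _ _)
        intro i hi
        have hne : i ≠ i₀ := Finset.ne_of_mem_erase hi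
        have hone : (1:ℝ) ≤ |(i:ℝ) - (i₀:ℝ)| := by
          have : 1 ≤ |(i:ℤ) - (i₀:ℤ)| :=
            Int.one_le_abs (sub_ne_zero.mpr (by exact_mod_cast hne))
          calc (1:ℝ) ≤ ((|(i:ℤ) - (i₀:ℤ)| : ℤ) : ℝ) := by exact_mod_cast this
            _ = |(i:ℝ) - (i₀:ℝ)| := by push_cast [Int.cast_abs]; norm_num
        have htri : |(i:ℝ) - (i₀:ℝ)| - |x - i₀ - 1| ≤ |x - i - 1| := by
          have h := abs_sub_abs_le_abs_sub ((i:ℝ) - (i₀:ℝ)) (x - i₀ - 1)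
          have heq : |(i:ℝ) - (i₀:ℝ) - (x - i₀ - 1)| = |x - i - 1| := by
            rw [show (i:ℝ) - (i₀:ℝ) - (x - i₀ - 1) = -(x - i - 1) by ring, abs_neg]
          linarith [heq ▸ h]
        linarith
      rw [hsplit] at hdiff
      linarith
    · push_neg at hex
      have := hsumE (Finset.range p) (le_refl _) hex
      linarith
  · -- second part
    intro hcase
    have hall : ∀ i ∈ Finset.range p, 1/lam ≤ |x - i - 1| := by
      intro i hi
      rcases hcase with h1 | h2 | h3
      · have hi0 : (0:ℝ) ≤ (i:ℝ) := Nat.cast_nonneg i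
        have : 1/lam ≤ -(x - i - 1) := by linarith
        linarith [neg_le_abs (x - i - 1)]
      · have hip : (i:ℝ) + 1 ≤ (p:ℝ) := by
          have := Finset.mem_range.mp hi
          exact_mod_cast Nat.succ_le_of_lt this
        have : 1/lam ≤ x - i - 1 := by linarith
        linarith [le_abs_self (x - i - 1)]
      · have := h3 (i+1)
        have heq : |x - ((i:ℕ)+1 : ℕ)| = |x - i - 1| := by push_cast; ring_nf
        linarith [heq ▸ this]
    linarith [hsumE (Finset.range p) (le_refl _) hall]
end

section
/- Let d ∈ ℕ, K > 0, G a finite subset of ℝ^d, and f : G → ℝ. Define the Lagrange interpolation polynomial L_f(x) = Σ_{x̄ ∈ G} f(x̄) ∏_{i=1}^d ∏_{y ∈ G, y ≠ x̄} (x_i - y_i)/(x̄_i - y_i). Set δ = min over distinct x, x' ∈ G and coordinates i of |x_i - x'_i|, F = max_{x ∈ G} |f(x)|, M = K + max_{x ∈ G} ∥x∥_∞, and A = |G| · F · (M/δ)^{d(|G|-1)-1} · d(|G|-1)/δ. Then for all x, z ∈ [-K,K]^d, |L_f(x) - L_f(z)| ≤ A · ∥x - z∥_∞. -/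
private lemma prod_sub_prod_abs_le {ι : Type*} (C ε : ℝ) (hC : 0 ≤ C) (hε : 0 ≤ ε)
    (s : Finset ι) (u v : ι → ℝ) (hu : ∀ k ∈ s, |u k| ≤ C) (hv : ∀ k ∈ s, |v k| ≤ C)
    (huv : ∀ k ∈ s, |u k - v k| ≤ ε) :
    |∏ k ∈ s, u k - ∏ k ∈ s, v k| ≤ (s.card : ℝ) * C ^ (s.card - 1) * ε := by
  classical
  induction s using Finset.cons_induction with
  | empty => simp
  | cons a s ha ih =>
    have hP : |∏ k ∈ s, u k| ≤ C ^ s.card := by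
      rw [Finset.abs_prod]
      calc ∏ k ∈ s, |u k| ≤ ∏ k ∈ s, C :=
            Finset.prod_le_prod (fun k _ => abs_nonneg _)
              (fun k hk => hu k (Finset.mem_cons_of_mem hk))
        _ = C ^ s.card := Finset.prod_const C
    have hva : |v a| ≤ C := hv a (Finset.mem_cons_self _ _)
    have ihs : |∏ k ∈ s, u k - ∏ k ∈ s, v k| ≤ (s.card : ℝ) * C ^ (s.card - 1) * ε :=
      ih (fun k hk => hu k (Finset.mem_cons_of_mem hk))
        (fun k hk => hv k (Finset.mem_cons_of_mem hk))
        (fun k hk => huv k (Finset.mem_cons_of_mem hk))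
    rw [Finset.prod_cons, Finset.prod_cons, Finset.card_cons]
    have key : u a * ∏ k ∈ s, u k - v a * ∏ k ∈ s, v k
        = (u a - v a) * ∏ k ∈ s, u k + v a * (∏ k ∈ s, u k - ∏ k ∈ s, v k) := by ring
    rw [key]
    calc |(u a - v a) * ∏ k ∈ s, u k + v a * (∏ k ∈ s, u k - ∏ k ∈ s, v k)|
        ≤ |(u a - v a) * ∏ k ∈ s, u k| + |v a * (∏ k ∈ s, u k - ∏ k ∈ s, v k)| :=
          abs_add_le _ _
      _ = |u a - v a| * |∏ k ∈ s, u k| + |v a| * |∏ k ∈ s, u k - ∏ k ∈ s, v k| := by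
          rw [abs_mul, abs_mul]
      _ ≤ ε * C ^ s.card + C * ((s.card : ℝ) * C ^ (s.card - 1) * ε) :=
          add_le_add
            (mul_le_mul (huv a (Finset.mem_cons_self _ _)) hP (abs_nonneg _) hε)
            (mul_le_mul hva ihs (abs_nonneg _) hC)
      _ ≤ ((s.card + 1 : ℕ) : ℝ) * C ^ (s.card + 1 - 1) * ε := by
          rcases s.card with _ | m
          · simp
          · have h1 : C * ((((m : ℕ) + 1 : ℕ) : ℝ) * C ^ ((m + 1) - 1) * ε)
                = (((m : ℕ) + 1 : ℕ) : ℝ) * C ^ (m + 1) * ε := by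
              simp only [Nat.add_sub_cancel, pow_succ]
              ring
            rw [h1]
            simp only [Nat.add_sub_cancel]
            push_cast
            nlinarith [pow_nonneg hC (m + 1), hε]

theorem lagrange_lipschitz (d : ℕ) (K : ℝ) (hK : 0 < K) (G : Finset (Fin d → ℝ))
    (f : (Fin d → ℝ) → ℝ) (δ F M : ℝ) (hδ : 0 < δ)
    (hsep : ∀ a ∈ G, ∀ b ∈ G, a ≠ b → ∀ i, δ ≤ |a i - b i|)
    (hF : ∀ a ∈ G, |f a| ≤ F)
    (hM : ∀ a ∈ G, ∀ i, |a i| ≤ M - K)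
    (x z : Fin d → ℝ) (hx : ∀ i, x i ∈ Set.Icc (-K) K) (hz : ∀ i, z i ∈ Set.Icc (-K) K) :
    |(∑ a ∈ G, f a * ∏ i, ∏ b ∈ G.erase a, (x i - b i) / (a i - b i)) -
     (∑ a ∈ G, f a * ∏ i, ∏ b ∈ G.erase a, (z i - b i) / (a i - b i))| ≤
      (G.card : ℝ) * F * (M / δ) ^ (d * (G.card - 1) - 1) * (d * (G.card - 1)) / δ *
        (⨆ i, |x i - z i|) := by
  classical
  rcases Nat.eq_zero_or_pos d with hd | hd
  · subst hd
    simp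
  rcases G.eq_empty_or_nonempty with hG | ⟨a0, ha0⟩
  · subst hG
    simp
  obtain ⟨i0⟩ : Nonempty (Fin d) := ⟨⟨0, hd⟩⟩
  set S := ⨆ i, |x i - z i| with hSdef
  have hxs : ∀ i, |x i - z i| ≤ S := by
    intro i
    rw [hSdef]
    exact le_ciSup (f := fun j => |x j - z j|) (Finite.bddAbove_range _) i
  have hS : 0 ≤ S := le_trans (abs_nonneg _) (hxs i0)
  have hF0 : 0 ≤ F := le_trans (abs_nonneg _) (hF a0 ha0)
  have hMK : 0 ≤ M - K := le_trans (abs_nonneg _) (hM a0 ha0 i0)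
  have hM0 : 0 ≤ M := by linarith
  obtain ⟨N, hNdef⟩ : ∃ N : ℕ, N = d * (G.card - 1) := ⟨_, rfl⟩
  set B : ℝ := (N : ℝ) * (M / δ) ^ (N - 1) * (S / δ) with hBdef
  have hbound : ∀ a ∈ G,
      |(∏ i, ∏ b ∈ G.erase a, (x i - b i) / (a i - b i)) -
       (∏ i, ∏ b ∈ G.erase a, (z i - b i) / (a i - b i))| ≤ B := by
    intro a ha
    have hcard : ((Finset.univ : Finset (Fin d)) ×ˢ G.erase a).card = N := by
      rw [hNdef, Finset.card_product, Finset.card_univ, Fintype.card_fin,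
        Finset.card_erase_of_mem ha]
    have h1 : (∏ i, ∏ b ∈ G.erase a, (x i - b i) / (a i - b i)) =
        ∏ p ∈ (Finset.univ : Finset (Fin d)) ×ˢ G.erase a,
          (x p.1 - p.2 p.1) / (a p.1 - p.2 p.1) :=
        (Finset.prod_product (s := (Finset.univ : Finset (Fin d))) (t := G.erase a)
          (f := fun p => (x p.1 - p.2 p.1) / (a p.1 - p.2 p.1))).symm
    have h2 : (∏ i, ∏ b ∈ G.erase a, (z i - b i) / (a i - b i)) =
        ∏ p ∈ (Finset.univ : Finset (Fin d)) ×ˢ G.erase a,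
          (z p.1 - p.2 p.1) / (a p.1 - p.2 p.1) :=
        (Finset.prod_product (s := (Finset.univ : Finset (Fin d))) (t := G.erase a)
          (f := fun p => (z p.1 - p.2 p.1) / (a p.1 - p.2 p.1))).symm
    rw [h1, h2, hBdef, ← hcard]
    have hden : ∀ p ∈ (Finset.univ : Finset (Fin d)) ×ˢ G.erase a,
        δ ≤ |a p.1 - p.2 p.1| := by
      intro p hp
      rw [Finset.mem_product] at hp
      have hb := hp.2
      exact hsep a ha p.2 (Finset.mem_of_mem_erase hb)
        (Ne.symm (Finset.ne_of_mem_erase hb)) p.1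
    have hwb : ∀ (w : Fin d → ℝ), (∀ i, w i ∈ Set.Icc (-K) K) →
        ∀ p ∈ (Finset.univ : Finset (Fin d)) ×ˢ G.erase a,
        |(w p.1 - p.2 p.1) / (a p.1 - p.2 p.1)| ≤ M / δ := by
      intro w hw p hp
      have hb : p.2 ∈ G := Finset.mem_of_mem_erase (Finset.mem_product.1 hp).2
      have hnum : |w p.1 - p.2 p.1| ≤ M := by
        have h1 : |w p.1| ≤ K := by
          rcases hw p.1 with ⟨hl, hr⟩
          exact abs_le.2 ⟨hl, hr⟩
        have h2 : |p.2 p.1| ≤ M - K := hM p.2 hb p.1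
        calc |w p.1 - p.2 p.1| ≤ |w p.1| + |p.2 p.1| := abs_sub _ _
          _ ≤ K + (M - K) := add_le_add h1 h2
          _ = M := by ring
      rw [abs_div]
      exact div_le_div₀ hM0 hnum hδ (hden p hp)
    apply prod_sub_prod_abs_le (M / δ) (S / δ) (div_nonneg hM0 hδ.le)
      (div_nonneg hS hδ.le)
    · exact hwb x hx
    · exact hwb z hz
    · intro p hp
      have : (x p.1 - p.2 p.1) / (a p.1 - p.2 p.1) - (z p.1 - p.2 p.1) / (a p.1 - p.2 p.1)
          = (x p.1 - z p.1) / (a p.1 - p.2 p.1) := by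
        rw [div_sub_div_same]; ring_nf
      rw [this, abs_div]
      exact div_le_div₀ hS (hxs p.1) hδ (hden p hp)
  have hmain : |(∑ a ∈ G, f a * ∏ i, ∏ b ∈ G.erase a, (x i - b i) / (a i - b i)) -
      (∑ a ∈ G, f a * ∏ i, ∏ b ∈ G.erase a, (z i - b i) / (a i - b i))|
      ≤ (G.card : ℝ) * (F * B) := by
    rw [← Finset.sum_sub_distrib]
    calc |∑ a ∈ G, (f a * ∏ i, ∏ b ∈ G.erase a, (x i - b i) / (a i - b i) -
            f a * ∏ i, ∏ b ∈ G.erase a, (z i - b i) / (a i - b i))|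
        ≤ ∑ a ∈ G, |f a * ∏ i, ∏ b ∈ G.erase a, (x i - b i) / (a i - b i) -
            f a * ∏ i, ∏ b ∈ G.erase a, (z i - b i) / (a i - b i)| :=
          Finset.abs_sum_le_sum_abs _ _
      _ ≤ ∑ _a ∈ G, F * B := by
          apply Finset.sum_le_sum
          intro a ha
          rw [← mul_sub, abs_mul]
          exact mul_le_mul (hF a ha) (hbound a ha) (abs_nonneg _) hF0
      _ = (G.card : ℝ) * (F * B) := by rw [Finset.sum_const, nsmul_eq_mul]
  have h1le : 1 ≤ G.card := Finset.card_pos.2 ⟨a0, ha0⟩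
  have hcast : ((N : ℕ) : ℝ) = (d : ℝ) * ((G.card : ℝ) - 1) := by
    rw [hNdef, Nat.cast_mul, Nat.cast_sub h1le]
    push_cast
    ring
  refine hmain.trans (le_of_eq ?_)
  rw [hBdef, ← hNdef, ← hcast]
  ring
end

section
/- Let d ∈ ℕ, K > 0, G a finite subset of ℝ^d, f : G → ℝ, and L_f the Lagrange interpolation polynomial of f. With δ, F, M as defined (δ = minimal coordinate-wise gap between distinct points of G, F = max |f| on G, M = K + max_{x∈G} ∥x∥_∞), for all x ∈ [-K,K]^d: |L_f(x)| ≤ |G| · F · (M/δ)^{d(|G|-1)}. -/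
theorem lagrange_bound (d : ℕ) (K : ℝ) (hK : 0 < K) (G : Finset (Fin d → ℝ))
    (f : (Fin d → ℝ) → ℝ) (δ F M : ℝ) (hδ : 0 < δ)
    (hsep : ∀ a ∈ G, ∀ b ∈ G, a ≠ b → ∀ i, δ ≤ |a i - b i|)
    (hF : ∀ a ∈ G, |f a| ≤ F)
    (hM : ∀ a ∈ G, ∀ i, |a i| ≤ M - K)
    (x : Fin d → ℝ) (hx : ∀ i, x i ∈ Set.Icc (-K) K) :
    |∑ a ∈ G, f a * ∏ i, ∏ b ∈ G.erase a, (x i - b i) / (a i - b i)| ≤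
      (G.card : ℝ) * F * (M / δ) ^ (d * (G.card - 1)) := by
  rcases G.eq_empty_or_nonempty with rfl | ⟨a0, ha0⟩
  · simp
  have hF0 : 0 ≤ F := le_trans (abs_nonneg _) (hF a0 ha0)
  have key : ∀ a ∈ G, |f a * ∏ i, ∏ b ∈ G.erase a, (x i - b i) / (a i - b i)|
      ≤ F * (M / δ) ^ (d * (G.card - 1)) := by
    intro a ha
    rw [abs_mul]
    have habs : |∏ i, ∏ b ∈ G.erase a, (x i - b i) / (a i - b i)|
        ≤ (M / δ) ^ (d * (G.card - 1)) := by
      rw [Finset.abs_prod]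
      calc ∏ i, |∏ b ∈ G.erase a, (x i - b i) / (a i - b i)|
          ≤ ∏ _i : Fin d, (M / δ) ^ (G.card - 1) := by
            apply Finset.prod_le_prod (fun i _ => abs_nonneg _)
            intro i _
            rw [Finset.abs_prod]
            have hbd : ∀ b ∈ G.erase a, |(x i - b i) / (a i - b i)| ≤ M / δ := by
              intro b hb
              have hbG := Finset.mem_of_mem_erase hb
              have hne : a ≠ b := (Finset.ne_of_mem_erase hb).symm
              have hxi : |x i| ≤ K := abs_le.mpr ⟨(hx i).1, (hx i).2⟩
              have h1 : |x i - b i| ≤ M := by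
                calc |x i - b i| ≤ |x i| + |b i| := abs_sub _ _
                  _ ≤ K + (M - K) := add_le_add hxi (hM b hbG i)
                  _ = M := by ring
              have h2 : δ ≤ |a i - b i| := hsep a ha b hbG hne i
              rw [abs_div]
              exact div_le_div₀ (le_trans (abs_nonneg _) h1) h1 hδ h2
            calc ∏ b ∈ G.erase a, |(x i - b i) / (a i - b i)|
                ≤ ∏ _b ∈ G.erase a, (M / δ) :=
                  Finset.prod_le_prod (fun b _ => abs_nonneg _) hbd
              _ = (M / δ) ^ (G.card - 1) := by
                  rw [Finset.prod_const, Finset.card_erase_of_mem ha]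
        _ = (M / δ) ^ (d * (G.card - 1)) := by
            rw [Finset.prod_const, Finset.card_univ, Fintype.card_fin, ← pow_mul,
              Nat.mul_comm]
    exact mul_le_mul (hF a ha) habs (abs_nonneg _) hF0
  calc |∑ a ∈ G, f a * ∏ i, ∏ b ∈ G.erase a, (x i - b i) / (a i - b i)|
      ≤ ∑ a ∈ G, |f a * ∏ i, ∏ b ∈ G.erase a, (x i - b i) / (a i - b i)| :=
        Finset.abs_sum_le_sum_abs _ _
    _ ≤ ∑ _a ∈ G, F * (M / δ) ^ (d * (G.card - 1)) := Finset.sum_le_sum key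
    _ = (G.card : ℝ) * F * (M / δ) ^ (d * (G.card - 1)) := by
        rw [Finset.sum_const, nsmul_eq_mul, mul_assoc]
end

section
/- Let T, λ > 0, φ : [0,T] → ℝ continuous and nonnegative with ∫₀ᵀ φ > 0, A ≥ λ/∫₀ᵀ φ, g ∈ ℝ, η ≥ 0, and ḡ : [0,T] → ℝ with |ḡ(t) - g| ≤ η for all t. Suppose x solves x'(t) = A·φ(t)·(ḡ(t) - x(t)) on [0,T] with x(0) = x₀. Then |x(T) - g| ≤ η(1 + e^{-λ}) + |x₀ - g|·e^{-λ}. -/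
theorem reach_perturbed (T lam A g η x₀ : ℝ) (hT : 0 < T) (hlam : 0 < lam) (hη : 0 ≤ η)
    (φ : ℝ → ℝ) (hφ : Continuous φ) (hφpos : ∀ t ∈ Set.Icc (0 : ℝ) T, 0 ≤ φ t)
    (hint : 0 < ∫ u in (0 : ℝ)..T, φ u)
    (hA : lam / ∫ u in (0 : ℝ)..T, φ u ≤ A)
    (gbar : ℝ → ℝ) (hgbar : ∀ t ∈ Set.Icc (0 : ℝ) T, |gbar t - g| ≤ η)
    (x : ℝ → ℝ) (hx0 : x 0 = x₀)
    (hx : ∀ t ∈ Set.Icc (0 : ℝ) T, HasDerivAt x (A * φ t * (gbar t - x t)) t) :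
    |x T - g| ≤ η * (1 + Real.exp (-lam)) + |x₀ - g| * Real.exp (-lam) := by
  set Φ : ℝ → ℝ := fun t => ∫ u in (0:ℝ)..t, φ u with hΦdef
  have hΦ : ∀ t : ℝ, HasDerivAt Φ (φ t) t := by
    intro t
    exact intervalIntegral.integral_hasDerivAt_right (hφ.intervalIntegrable 0 t)
      (hφ.stronglyMeasurableAtFilter _ _) hφ.continuousAt
  have hA0 : 0 < A := lt_of_lt_of_le (div_pos hlam hint) hA
  have hE : ∀ t : ℝ, HasDerivAt (fun s => Real.exp (A * Φ s)) (A * φ t * Real.exp (A * Φ t)) t := by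
    intro t
    have := (((hΦ t).const_mul A).exp)
    convert this using 1; ring
  -- derivatives of the two auxiliary functions
  have hu : ∀ t ∈ Set.Icc (0:ℝ) T,
      HasDerivAt (fun s => (x s - (g + η)) * Real.exp (A * Φ s))
        (A * φ t * Real.exp (A * Φ t) * (gbar t - (g + η))) t := by
    intro t ht
    have h := (((hx t ht).sub_const (g + η)).mul (hE t))
    exact h.congr_deriv (by ring)
  have hv : ∀ t ∈ Set.Icc (0:ℝ) T,
      HasDerivAt (fun s => (x s - (g - η)) * Real.exp (A * Φ s))
        (A * φ t * Real.exp (A * Φ t) * (gbar t - (g - η))) t := by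
    intro t ht
    have h := (((hx t ht).sub_const (g - η)).mul (hE t))
    exact h.congr_deriv (by ring)
  have hIoo : Set.Ioo (0:ℝ) T ⊆ Set.Icc (0:ℝ) T := Set.Ioo_subset_Icc_self
  have hconv : Convex ℝ (Set.Icc (0:ℝ) T) := convex_Icc _ _
  have hintIcc : interior (Set.Icc (0:ℝ) T) = Set.Ioo (0:ℝ) T := interior_Icc
  have hmemT : T ∈ Set.Icc (0:ℝ) T := ⟨le_of_lt hT, le_refl T⟩
  have hmem0 : (0:ℝ) ∈ Set.Icc (0:ℝ) T := ⟨le_refl 0, le_of_lt hT⟩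
  -- u is antitone
  have huanti : AntitoneOn (fun s => (x s - (g + η)) * Real.exp (A * Φ s)) (Set.Icc (0:ℝ) T) := by
    apply antitoneOn_of_deriv_nonpos hconv
    · exact fun t ht => (hu t ht).continuousAt.continuousWithinAt
    · rw [hintIcc]; exact fun t ht => (hu t (hIoo ht)).differentiableAt.differentiableWithinAt
    · rw [hintIcc]
      intro t ht
      rw [(hu t (hIoo ht)).deriv]
      have h1 : gbar t - (g + η) ≤ 0 := by
        have := (abs_le.mp (hgbar t (hIoo ht))).2; linarith
      have h2 : 0 ≤ A * φ t * Real.exp (A * Φ t) :=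
        mul_nonneg (mul_nonneg hA0.le (hφpos t (hIoo ht))) (Real.exp_pos _).le
      exact mul_nonpos_of_nonneg_of_nonpos h2 h1
  -- v is monotone
  have hvmono : MonotoneOn (fun s => (x s - (g - η)) * Real.exp (A * Φ s)) (Set.Icc (0:ℝ) T) := by
    apply monotoneOn_of_deriv_nonneg hconv
    · exact fun t ht => (hv t ht).continuousAt.continuousWithinAt
    · rw [hintIcc]; exact fun t ht => (hv t (hIoo ht)).differentiableAt.differentiableWithinAt
    · rw [hintIcc]
      intro t ht
      rw [(hv t (hIoo ht)).deriv]
      have h1 : 0 ≤ gbar t - (g - η) := by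
        have := (abs_le.mp (hgbar t (hIoo ht))).1; linarith
      have h2 : 0 ≤ A * φ t * Real.exp (A * Φ t) :=
        mul_nonneg (mul_nonneg hA0.le (hφpos t (hIoo ht))) (Real.exp_pos _).le
      exact mul_nonneg h2 h1
  have hΦ0 : Φ 0 = 0 := by simp [hΦdef]
  have hu' := huanti hmem0 hmemT hT.le
  have hv' := hvmono hmem0 hmemT hT.le
  simp only [hΦ0, mul_zero, Real.exp_zero, mul_one, hx0] at hu' hv'
  -- set c = A * Φ T
  set c : ℝ := A * Φ T with hc
  have hclam : lam ≤ c := by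
    have : lam ≤ A * Φ T := by
      rw [div_le_iff₀ hint] at hA
      calc lam ≤ A * ∫ u in (0:ℝ)..T, φ u := by linarith [hA]
        _ = A * Φ T := rfl
    exact this
  have hec : Real.exp (-c) ≤ Real.exp (-lam) := Real.exp_le_exp.mpr (by linarith)
  have hecpos : 0 < Real.exp c := Real.exp_pos c
  -- from hu' : (x T - (g+η)) * exp c ≤ x₀ - (g+η)
  -- from hv' : x₀ - (g-η) ≤ (x T - (g-η)) * exp c
  have hinv : Real.exp (-c) = (Real.exp c)⁻¹ := Real.exp_neg c
  have hupper : x T - g ≤ η + (x₀ - g - η) * Real.exp (-c) := by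
    have h2 : x T - (g + η) ≤ (x₀ - (g + η)) * (Real.exp c)⁻¹ := by
      have h3 := mul_le_mul_of_nonneg_right hu' (inv_nonneg.mpr hecpos.le)
      rwa [mul_inv_cancel_right₀ hecpos.ne'] at h3
    have heq : (x₀ - (g + η)) * (Real.exp c)⁻¹ = (x₀ - g - η) * (Real.exp c)⁻¹ := by ring
    rw [hinv]; linarith
  have hlower : -η + (x₀ - g + η) * Real.exp (-c) ≤ x T - g := by
    have h2 : (x₀ - (g - η)) * (Real.exp c)⁻¹ ≤ x T - (g - η) := by
      have h3 := mul_le_mul_of_nonneg_right hv' (inv_nonneg.mpr hecpos.le)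
      rwa [mul_inv_cancel_right₀ hecpos.ne'] at h3
    have heq : (x₀ - (g - η)) * (Real.exp c)⁻¹ = (x₀ - g + η) * (Real.exp c)⁻¹ := by ring
    rw [hinv]; linarith
  have habs : x₀ - g ≤ |x₀ - g| := le_abs_self _
  have habs' : -(x₀ - g) ≤ |x₀ - g| := neg_le_abs _
  have hecpos' : (0:ℝ) < Real.exp (-c) := Real.exp_pos _
  have heclam : (0:ℝ) < Real.exp (-lam) := Real.exp_pos _
  rw [abs_le]
  constructor
  · nlinarith [mul_le_mul_of_nonneg_left hec (abs_nonneg (x₀ - g)),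
      mul_le_mul_of_nonneg_right habs' hecpos'.le]
  · nlinarith [mul_le_mul_of_nonneg_left hec (abs_nonneg (x₀ - g)),
      mul_le_mul_of_nonneg_right habs hecpos'.le]
end
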